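/- (Adjoint recursion in the preview LQR proof.) Suppose P = Pᵀ solves the identity (A - BR⁻¹Sᵀ)ᵀ P (I + BR⁻¹BᵀP)⁻¹ (A - BR⁻¹Sᵀ) + Q - SR⁻¹Sᵀ = P, with R = Rᵀ > 0 and P > 0. Define G := (I + BR⁻¹BᵀP)⁻¹(A - BR⁻¹Sᵀ). Suppose sequences (x_k), (μ_k), (v_k) satisfy x_{k+1} = A x_k + B v_k, μ_k = Aᵀ μ_{k+1} + Q x_k + S v_k, v_k = -R⁻¹Bᵀ μ_{k+1} - R⁻¹Sᵀ x_k. Then the sequence q_k := P x_k - μ_k satisfies q_k = Gᵀ q_{k+1} for all k. -/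
import Mathlib


open Matrix

set_option maxHeartbeats 1000000 in
/-- Adjoint recursion in the preview LQR proof: with `P = Pᵀ ≻ 0` solving the
Riccati identity, `G = (I + BR⁻¹BᵀP)⁻¹(A - BR⁻¹Sᵀ)`, and sequences satisfying the
state/adjoint/input relations, `q_k := Px_k - μ_k` satisfies `q_k = Gᵀ q_{k+1}`. -/
theorem stmt_17 (n p : ℕ) (A Q P : Matrix (Fin n) (Fin n) ℝ)
    (B S : Matrix (Fin n) (Fin p) ℝ) (R : Matrix (Fin p) (Fin p) ℝ)
    (hR : R.PosDef) (hP : P.PosDef)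
    (hRic : (A - B * R⁻¹ * Sᵀ)ᵀ * P * (1 + B * R⁻¹ * Bᵀ * P)⁻¹ * (A - B * R⁻¹ * Sᵀ) +
        Q - S * R⁻¹ * Sᵀ = P)
    (G : Matrix (Fin n) (Fin n) ℝ)
    (hG : G = (1 + B * R⁻¹ * Bᵀ * P)⁻¹ * (A - B * R⁻¹ * Sᵀ))
    (x μ : ℕ → Fin n → ℝ) (v : ℕ → Fin p → ℝ)
    (hx : ∀ k, x (k + 1) = A.mulVec (x k) + B.mulVec (v k))
    (hμ : ∀ k, μ k = Aᵀ.mulVec (μ (k + 1)) + Q.mulVec (x k) + S.mulVec (v k))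
    (hv : ∀ k, v k = -(R⁻¹ * Bᵀ).mulVec (μ (k + 1)) - (R⁻¹ * Sᵀ).mulVec (x k))
    (q : ℕ → Fin n → ℝ) (hq : ∀ k, q k = P.mulVec (x k) - μ k) :
    ∀ k, q k = Gᵀ.mulVec (q (k + 1)) := by
  intro k
  set Ab : Matrix (Fin n) (Fin n) ℝ := A - B * R⁻¹ * Sᵀ with hAb
  set M : Matrix (Fin n) (Fin n) ℝ := 1 + B * R⁻¹ * Bᵀ * P with hM
  have hPt : Pᵀ = P := hP.isHermitian.eq
  have hRt : Rᵀ = R := by simpa using hR.isHermitian.eq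
  have hRinvt : (R⁻¹)ᵀ = R⁻¹ := by
    rw [transpose_nonsing_inv, hRt]
  -- invertibility of M
  have hPdet : IsUnit P.det := isUnit_iff_ne_zero.2 (ne_of_gt hP.det_pos)
  have hfac : M = (P⁻¹ + B * R⁻¹ * Bᵀ) * P := by
    rw [hM, add_mul, nonsing_inv_mul P hPdet]
  have hBRB : (B * R⁻¹ * Bᵀ).PosSemidef := by
    have := (hR.inv.posSemidef).mul_mul_conjTranspose_same B
    simpa using this
  have hsum : (P⁻¹ + B * R⁻¹ * Bᵀ).PosDef := hP.inv.add_posSemidef hBRB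
  have hMdet : IsUnit M.det := by
    rw [hfac, det_mul]
    exact (isUnit_iff_ne_zero.2 (ne_of_gt hsum.det_pos)).mul hPdet
  have hMtdet : IsUnit Mᵀ.det := by rwa [det_transpose]
  have hMt : Mᵀ = 1 + P * (B * (R⁻¹ * Bᵀ)) := by
    rw [hM, transpose_add, transpose_one]
    simp only [transpose_mul, transpose_transpose, hPt, hRinvt]
  -- key: Mᵀ * P * M⁻¹ = P
  have hkey : Mᵀ * (P * M⁻¹) = P := by
    have h1 : Mᵀ * P = P * M := by
      rw [hMt, hM, add_mul, one_mul, mul_add, mul_one]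
      simp only [Matrix.mul_assoc]
    rw [← mul_assoc, h1, mul_assoc, mul_nonsing_inv M hMdet, mul_one]
  -- abbreviations
  set a := x k
  set b := μ (k + 1)
  set w : Fin n → ℝ := (P * (M⁻¹ * Ab)).mulVec a - b with hw
  -- μ k in closed form
  have hmuk : μ k = Abᵀ.mulVec b + (Q - S * R⁻¹ * Sᵀ).mulVec a := by
    rw [hμ k, hv k, hAb]
    simp only [mulVec_sub, mulVec_add, mulVec_neg, mulVec_mulVec, sub_mulVec,
      transpose_sub, transpose_mul, transpose_transpose, hRinvt, Matrix.mul_assoc]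
    module
  -- x (k+1) in closed form
  have hxk : x (k + 1) = Ab.mulVec a - (B * (R⁻¹ * Bᵀ)).mulVec b := by
    rw [hx k, hv k, hAb]
    simp only [mulVec_sub, mulVec_add, mulVec_neg, mulVec_mulVec, sub_mulVec, Matrix.mul_assoc]
    module
  -- Step A : q k = Abᵀ *ᵥ w
  have hA1 : q k = Abᵀ.mulVec w := by
    have hric' : Abᵀ * (P * (M⁻¹ * Ab)) = P - (Q - S * R⁻¹ * Sᵀ) := by
      have h2 : Abᵀ * (P * (M⁻¹ * Ab)) = Abᵀ * P * M⁻¹ * Ab := by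
        simp only [Matrix.mul_assoc]
      rw [h2, eq_sub_iff_add_eq, add_sub, hRic]
    rw [hq k, hmuk, hw]
    rw [mulVec_sub, mulVec_mulVec, hric']
    simp only [sub_mulVec]
    module
  -- Step B : Mᵀ *ᵥ w = q (k+1)
  have hB1 : Mᵀ.mulVec w = q (k + 1) := by
    have hk2 : Mᵀ * (P * (M⁻¹ * Ab)) = P * Ab := by
      rw [show P * (M⁻¹ * Ab) = (P * M⁻¹) * Ab from (mul_assoc _ _ _).symm,
        ← mul_assoc, hkey]
    rw [hq (k + 1), hxk, hw]
    simp only [mulVec_sub, mulVec_mulVec]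
    rw [hk2, hMt]
    simp only [add_mulVec, one_mulVec, mulVec_sub]
    module
  -- conclude
  rw [← hB1, hA1, hG]
  rw [transpose_mul, mulVec_mulVec, mul_assoc, transpose_nonsing_inv,
    nonsing_inv_mul Mᵀ hMtdet, mul_one]
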